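/- Let X, Y : [t₀, t_N] → ℝ^v be continuously differentiable driving paths and f : ℝ^w → ℝ^{w×v} be bounded by B and globally L-Lipschitz. If Z and W solve the respective CDEs dZ = f(Z) dX and dW = f(W) dY with Z_{t₀} = W_{t₀} and ‖X'(s) − Y'(s)‖ ≤ ε, ‖Y'(s)‖ ≤ M for all s, then ‖Z_t − W_t‖ ≤ (B ε / (L M)) · (e^{L M (t − t₀)} − 1) for all t ∈ [t₀, t_N]. -/
import Mathlib

open Set

lemma integral_hasDerivWithinAt_Ici {w : ℕ} {t₀ tN : ℝ} {h : ℝ → Fin w → ℝ}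
    (hc : ContinuousOn h (Icc t₀ tN)) {t : ℝ} (ht : t ∈ Ico t₀ tN) :
    HasDerivWithinAt (fun x => ∫ s in t₀..x, h s) (h t) (Ici t) t := by
  have htmem : t ∈ Icc t₀ tN := ⟨ht.1, le_of_lt ht.2⟩
  have hIcc : Icc t₀ tN ∈ nhdsWithin t (Ioi t) := by
    refine mem_nhdsWithin.2 ⟨Iio tN, isOpen_Iio, ht.2, ?_⟩
    rintro x ⟨hx1, hx2⟩
    exact ⟨ht.1.trans (le_of_lt hx2), le_of_lt hx1⟩
  have hint : IntervalIntegrable h MeasureTheory.volume t₀ t := by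
    apply ContinuousOn.intervalIntegrable
    apply hc.mono
    rw [uIcc_of_le ht.1]
    exact Icc_subset_Icc le_rfl (le_of_lt ht.2)
  have hmeas : StronglyMeasurableAtFilter h (nhdsWithin t (Ioi t)) := by
    exact ⟨Icc t₀ tN, hIcc, (hc.mono (fun x hx => hx)).aestronglyMeasurable measurableSet_Icc⟩
  have hcw : ContinuousWithinAt h (Ioi t) t :=
    (hc.continuousWithinAt htmem).mono_of_mem_nhdsWithin hIcc
  exact intervalIntegral.integral_hasDerivWithinAt_right hint hmeas hcw

theorem cde_continuity_in_driving_path (v w : ℕ) (t₀ tN M B ε : ℝ) (ht : t₀ ≤ tN)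
    (hε : 0 ≤ ε) (hB0 : 0 ≤ B) (hM0 : 0 < M)
    (X' Y' : ℝ → Fin v → ℝ)
    (hX'c : ContinuousOn X' (Icc t₀ tN)) (hY'c : ContinuousOn Y' (Icc t₀ tN))
    (f : (Fin w → ℝ) → ((Fin v → ℝ) →L[ℝ] (Fin w → ℝ)))
    (hB : ∀ z, ‖f z‖ ≤ B) (L : NNReal) (hL : LipschitzWith L f) (hL0 : 0 < (L : ℝ))
    (hXY : ∀ s ∈ Icc t₀ tN, ‖X' s - Y' s‖ ≤ ε)
    (hM : ∀ s ∈ Icc t₀ tN, ‖Y' s‖ ≤ M)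
    (Z W : ℝ → Fin w → ℝ)
    (hZc : ContinuousOn Z (Icc t₀ tN)) (hWc : ContinuousOn W (Icc t₀ tN))
    (hZW0 : Z t₀ = W t₀)
    (hZ : ∀ t ∈ Icc t₀ tN, Z t = Z t₀ + ∫ s in t₀..t, f (Z s) (X' s))
    (hW : ∀ t ∈ Icc t₀ tN, W t = W t₀ + ∫ s in t₀..t, f (W s) (Y' s)) :
    ∀ t ∈ Icc t₀ tN,
      ‖Z t - W t‖ ≤ (B * ε / ((L : ℝ) * M)) * (Real.exp ((L : ℝ) * M * (t - t₀)) - 1) := by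
  set h1 : ℝ → Fin w → ℝ := fun s => f (Z s) (X' s) with hh1
  set h2 : ℝ → Fin w → ℝ := fun s => f (W s) (Y' s) with hh2
  have hfc : Continuous f := hL.continuous
  have h1c : ContinuousOn h1 (Icc t₀ tN) :=
    ContinuousOn.clm_apply (hfc.comp_continuousOn hZc) hX'c
  have h2c : ContinuousOn h2 (Icc t₀ tN) :=
    ContinuousOn.clm_apply (hfc.comp_continuousOn hWc) hY'c
  set u : ℝ → Fin w → ℝ := fun s => Z s - W s with hu
  set u' : ℝ → Fin w → ℝ := fun s => h1 s - h2 s with hu'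
  have huc : ContinuousOn u (Icc t₀ tN) := hZc.sub hWc
  have hderiv : ∀ t ∈ Ico t₀ tN, HasDerivWithinAt u (u' t) (Ici t) t := by
    intro t htm
    have hIcc : Icc t₀ tN ∈ nhdsWithin t (Ici t) := by
      refine mem_nhdsWithin.2 ⟨Iio tN, isOpen_Iio, htm.2, ?_⟩
      rintro x ⟨hx1, hx2⟩
      exact ⟨htm.1.trans hx2, le_of_lt hx1⟩
    have hZd : HasDerivWithinAt Z (h1 t) (Ici t) t := by
      have := ((integral_hasDerivWithinAt_Ici h1c htm).const_add (Z t₀))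
      refine this.congr_of_eventuallyEq ?_ (hZ t ⟨htm.1, htm.2.le⟩)
      exact Filter.eventuallyEq_of_mem hIcc (fun x hx => hZ x hx)
    have hWd : HasDerivWithinAt W (h2 t) (Ici t) t := by
      have := ((integral_hasDerivWithinAt_Ici h2c htm).const_add (W t₀))
      refine this.congr_of_eventuallyEq ?_ (hW t ⟨htm.1, htm.2.le⟩)
      exact Filter.eventuallyEq_of_mem hIcc (fun x hx => hW x hx)
    exact hZd.sub hWd
  have hbound : ∀ t ∈ Ico t₀ tN, ‖u' t‖ ≤ ((L : ℝ) * M) * ‖u t‖ + B * ε := by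
    intro t htm
    have htmem : t ∈ Icc t₀ tN := ⟨htm.1, htm.2.le⟩
    have key : u' t = f (Z t) (X' t - Y' t) + (f (Z t) - f (W t)) (Y' t) := by
      simp only [hu', hh1, hh2, map_sub, ContinuousLinearMap.sub_apply]
      abel
    rw [key]
    calc ‖f (Z t) (X' t - Y' t) + (f (Z t) - f (W t)) (Y' t)‖
        ≤ ‖f (Z t) (X' t - Y' t)‖ + ‖(f (Z t) - f (W t)) (Y' t)‖ := norm_add_le _ _
      _ ≤ ‖f (Z t)‖ * ‖X' t - Y' t‖ + ‖f (Z t) - f (W t)‖ * ‖Y' t‖ := by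
          gcongr <;> exact ContinuousLinearMap.le_opNorm _ _
      _ ≤ B * ε + ((L : ℝ) * ‖Z t - W t‖) * M := by
          have a3 : ‖f (Z t) - f (W t)‖ ≤ (L : ℝ) * ‖Z t - W t‖ := by
            rw [← dist_eq_norm, ← dist_eq_norm]; exact hL.dist_le_mul _ _
          exact add_le_add
            (mul_le_mul (hB _) (hXY t htmem) (norm_nonneg _) hB0)
            (mul_le_mul a3 (hM t htmem) (norm_nonneg _) (by positivity))
      _ = ((L : ℝ) * M) * ‖u t‖ + B * ε := by ring
  have hK : (L : ℝ) * M ≠ 0 := by positivity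
  have hinit : ‖u t₀‖ ≤ 0 := by simp [hu, hZW0]
  have := norm_le_gronwallBound_of_norm_deriv_right_le huc hderiv hinit hbound
  intro t htmem
  have h := this t htmem
  rw [gronwallBound_of_K_ne_0 hK] at h
  simpa [hu, mul_comm, mul_assoc, mul_left_comm] using h
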